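/- arXiv:2301.09547 — 2 statements merged into one kernel-verified Lean document; each statement's English description precedes it below -/
import Mathlib

section
/- Let $X_1,\dots,X_N \in \mathbb{R}^3$ satisfy $\min_{i\neq j}|X_i - X_j| \geq c N^{-1/3}$. Then for every point $x \in \mathbb{R}^3$, $\frac{1}{N}\sum_{i : |x - X_i| \geq c N^{-1/3}/2} \frac{1}{|x - X_i|^4} \leq C \min\left(N^{1/3}, \operatorname{dist}(x, \{X_1,\dots,X_N\})^{-1}\right)$ for a constant $C$ depending only on $c$. -/
open Metric MeasureTheory Finset

lemma counting_ballpack {N : ℕ} (X : Fin N → EuclideanSpace ℝ (Fin 3))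
    (x : EuclideanSpace ℝ (Fin 3)) (r : ℝ) (hr : 0 < r)
    (hsep : ∀ i j, i ≠ j → r ≤ dist (X i) (X j)) (R : ℝ) (hR : 0 ≤ R) :
    ((Finset.univ.filter (fun i => dist x (X i) ≤ R)).card : ℝ) * (r/2)^3 ≤ (R + r/2)^3 := by
  set T := Finset.univ.filter (fun i => dist x (X i) ≤ R) with hT
  set κ := ENNReal.ofReal (Real.sqrt Real.pi ^ 3 / Real.Gamma (3 / 2 + 1)) with hκ
  have hκpos : 0 < κ := by
    rw [hκ]
    apply ENNReal.ofReal_pos.2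
    apply div_pos (by positivity) (Real.Gamma_pos_of_pos (by norm_num))
  have hvol : ∀ y : EuclideanSpace ℝ (Fin 3), ∀ s : ℝ,
      volume (ball y s) = ENNReal.ofReal s ^ 3 * κ := by
    intro y s
    rw [EuclideanSpace.volume_ball]
    norm_num [hκ]
  have hdisj : (↑T : Set (Fin N)).PairwiseDisjoint (fun i => ball (X i) (r/2)) := by
    intro i _ j _ hij
    exact ball_disjoint_ball (by linarith [hsep i j hij])
  have hsub : (⋃ i ∈ T, ball (X i) (r/2)) ⊆ ball x (R + r/2) := by
    intro y hy
    simp only [Set.mem_iUnion] at hy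
    obtain ⟨i, hi, hyi⟩ := hy
    rw [hT, Finset.mem_filter] at hi
    have := mem_ball.1 hyi
    rw [mem_ball]
    calc dist y x ≤ dist y (X i) + dist (X i) x := dist_triangle _ _ _
      _ < r/2 + R := by rw [dist_comm (X i) x]; linarith [hi.2]
      _ = R + r/2 := by ring
  have hmeas : volume (⋃ i ∈ T, ball (X i) (r/2)) = T.card * (ENNReal.ofReal (r/2) ^ 3 * κ) := by
    rw [measure_biUnion_finset hdisj (fun i _ => measurableSet_ball)]
    simp [hvol, Finset.sum_const, mul_comm]
  have hle : (T.card : ENNReal) * (ENNReal.ofReal (r/2) ^ 3 * κ) ≤ ENNReal.ofReal (R + r/2) ^ 3 * κ := by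
    rw [← hmeas, ← hvol]
    exact measure_mono hsub
  have hκne : κ ≠ 0 := hκpos.ne'
  have hκtop : κ ≠ ⊤ := ENNReal.ofReal_ne_top
  rw [← mul_assoc] at hle
  have hle2 : (T.card : ENNReal) * ENNReal.ofReal (r/2) ^ 3 ≤ ENNReal.ofReal (R + r/2) ^ 3 :=
    (ENNReal.mul_le_mul_iff_left hκne hκtop).1 hle
  have h2 : (0:ℝ) ≤ r/2 := by linarith
  rw [← ENNReal.ofReal_pow h2, ← ENNReal.ofReal_pow (by linarith),
    ← ENNReal.ofReal_natCast, ← ENNReal.ofReal_mul (by positivity)] at hle2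
  exact (ENNReal.ofReal_le_ofReal_iff (by positivity)).1 hle2

lemma dyadic_sum {ι : Type*} [DecidableEq ι] (S : Finset ι) (d : ι → ℝ) (ρ M : ℝ)
    (hρ : 0 < ρ) (hM : 0 ≤ M) (hd : ∀ i ∈ S, ρ ≤ d i)
    (hcount : ∀ R : ℝ, ρ ≤ R → ((S.filter (fun i => d i ≤ R)).card : ℝ) ≤ M * (R/ρ)^3) :
    ∑ i ∈ S, d i ^ (-(4:ℝ)) ≤ 16 * M * (ρ^4)⁻¹ := by
  classical
  set φ : ι → ℕ := fun i => Nat.log 2 ⌊d i / ρ⌋₊ with hφ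
  set K := S.sup φ + 1 with hK
  have hmaps : ∀ i ∈ S, φ i ∈ Finset.range K :=
    fun i hi => Finset.mem_range.2 (Nat.lt_succ_of_le (Finset.le_sup hi))
  rw [← Finset.sum_fiberwise_of_maps_to hmaps]
  -- facts about fibers
  have key : ∀ k : ℕ, ∀ i ∈ S.filter (fun i => φ i = k),
      2^k * ρ ≤ d i ∧ d i ≤ 2^(k+1) * ρ := by
    intro k i hi
    rw [Finset.mem_filter] at hi
    obtain ⟨hiS, hik⟩ := hi
    have hdi : ρ ≤ d i := hd i hiS
    have h1 : (1:ℝ) ≤ d i / ρ := (one_le_div hρ).2 hdi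
    set m := ⌊d i / ρ⌋₊ with hm
    have hm1 : 1 ≤ m := Nat.le_floor (by exact_mod_cast h1)
    have hlow : (2^k : ℝ) ≤ d i / ρ := by
      calc (2^k : ℝ) = ((2^(Nat.log 2 m) : ℕ) : ℝ) := by rw [← hik]; push_cast [hφ]; ring
        _ ≤ (m : ℝ) := by exact_mod_cast Nat.pow_log_le_self 2 (by omega)
        _ ≤ d i / ρ := Nat.floor_le (by linarith)
    have hhigh : d i / ρ ≤ (2^(k+1) : ℝ) := by
      have h2 : d i / ρ < m + 1 := Nat.lt_floor_add_one _
      have h3 : m + 1 ≤ 2^(k+1) := by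
        have h4 := Nat.lt_pow_succ_log_self (b := 2) (by norm_num) m
        have hik' : Nat.log 2 m = k := hik
        rw [hik'] at h4
        exact h4
      calc d i / ρ ≤ (m : ℝ) + 1 := h2.le
        _ ≤ (2^(k+1) : ℝ) := by exact_mod_cast h3
    have hdiv : (d i / ρ) * ρ = d i := div_mul_cancel₀ _ hρ.ne'
    exact ⟨by rw [← hdiv]; exact mul_le_mul_of_nonneg_right hlow hρ.le,
      by rw [← hdiv]; exact mul_le_mul_of_nonneg_right hhigh hρ.le⟩
  have hterm : ∀ k ∈ Finset.range K,
      ∑ i ∈ S.filter (fun i => φ i = k), d i ^ (-(4:ℝ)) ≤ 8 * M * (1/2:ℝ)^k * (ρ^4)⁻¹ := by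
    intro k _
    have hb : ∀ i ∈ S.filter (fun i => φ i = k), d i ^ (-(4:ℝ)) ≤ ((2^k * ρ)^4)⁻¹ := by
      intro i hi
      have h2 := key k i hi
      have hpos : (0:ℝ) < 2^k * ρ := by positivity
      have : d i ^ (-(4:ℝ)) ≤ (2^k * ρ) ^ (-(4:ℝ)) :=
        Real.rpow_le_rpow_of_nonpos hpos h2.1 (by norm_num)
      calc d i ^ (-(4:ℝ)) ≤ (2^k * ρ) ^ (-(4:ℝ)) := this
        _ = ((2^k * ρ)^(4:ℕ))⁻¹ := by
            rw [← Real.rpow_natCast (2^k * ρ) 4, ← Real.rpow_neg hpos.le]; norm_num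
    have hcard : ((S.filter (fun i => φ i = k)).card : ℝ) ≤ M * 2^(3*(k+1)) := by
      have hsub : S.filter (fun i => φ i = k) ⊆ S.filter (fun i => d i ≤ 2^(k+1) * ρ) := by
        intro i hi
        rw [Finset.mem_filter] at hi ⊢
        exact ⟨hi.1, (key k i (Finset.mem_filter.2 hi)).2⟩
      have h1 : ((S.filter (fun i => φ i = k)).card : ℝ) ≤
          ((S.filter (fun i => d i ≤ 2^(k+1) * ρ)).card : ℝ) := by
        exact_mod_cast Finset.card_le_card hsub
      have h2 := hcount (2^(k+1) * ρ) (le_mul_of_one_le_left hρ.le (one_le_pow₀ (by norm_num)))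
      calc ((S.filter (fun i => φ i = k)).card : ℝ) ≤ M * (2^(k+1) * ρ / ρ)^3 := h1.trans h2
        _ = M * 2^(3*(k+1)) := by
            rw [mul_div_assoc, div_self hρ.ne', mul_one, ← pow_mul]
            ring_nf
    calc ∑ i ∈ S.filter (fun i => φ i = k), d i ^ (-(4:ℝ))
        ≤ (S.filter (fun i => φ i = k)).card • ((2^k * ρ)^4)⁻¹ := Finset.sum_le_card_nsmul _ _ _ hb
      _ = ((S.filter (fun i => φ i = k)).card : ℝ) * ((2^k * ρ)^4)⁻¹ := by
          rw [nsmul_eq_mul]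
      _ ≤ M * 2^(3*(k+1)) * ((2^k * ρ)^4)⁻¹ := by
          apply mul_le_mul_of_nonneg_right hcard (by positivity)
      _ = 8 * M * (1/2:ℝ)^k * (ρ^4)⁻¹ := by
          rw [mul_pow, ← pow_mul]
          field_simp
          rw [one_div, inv_pow]
          field_simp
          ring
  calc ∑ k ∈ Finset.range K, ∑ i ∈ S.filter (fun i => φ i = k), d i ^ (-(4:ℝ))
      ≤ ∑ k ∈ Finset.range K, 8 * M * (1/2:ℝ)^k * (ρ^4)⁻¹ := Finset.sum_le_sum hterm
    _ = 8 * M * (ρ^4)⁻¹ * ∑ k ∈ Finset.range K, (1/2:ℝ)^k := by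
        rw [Finset.mul_sum]; apply Finset.sum_congr rfl; intros; ring
    _ ≤ 8 * M * (ρ^4)⁻¹ * 2 := by
        apply mul_le_mul_of_nonneg_left _ (by positivity)
        rw [geom_sum_eq (by norm_num : (1/2:ℝ) ≠ 1) K]
        have hK0 : (0:ℝ) ≤ (1/2:ℝ)^K := by positivity
        rw [div_le_iff_of_neg (by norm_num : (1/2:ℝ) - 1 < 0)]
        linarith
    _ = 16 * M * (ρ^4)⁻¹ := by ring

set_option maxHeartbeats 2000000 in
/-- **Pointwise bound on sums of `|x - X_i|⁻⁴` for separated points.**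
If `X_1,…,X_N ∈ ℝ³` are `c N^{-1/3}`-separated then for every `x`,
`N⁻¹ ∑_{i : |x-X_i| ≥ cN^{-1/3}/2} |x-X_i|⁻⁴ ≤ C min(N^{1/3}, dist(x, {X_i})⁻¹)`,
where the minimum is interpreted as `N^{1/3}` when `x` coincides with one of the points. -/
theorem pointwise_sum_dist_pow_four (c : ℝ) (hc : 0 < c) :
    ∃ C : ℝ, 0 < C ∧ ∀ (N : ℕ), 0 < N → ∀ X : Fin N → EuclideanSpace ℝ (Fin 3),
      (∀ i j, i ≠ j → c * (N : ℝ) ^ (-(1 / 3 : ℝ)) ≤ dist (X i) (X j)) →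
      ∀ x : EuclideanSpace ℝ (Fin 3),
      (N : ℝ)⁻¹ *
          ∑ i ∈ Finset.univ.filter
              (fun i => c * (N : ℝ) ^ (-(1 / 3 : ℝ)) / 2 ≤ dist x (X i)),
            (dist x (X i)) ^ (-(4 : ℝ)) ≤
        C * (if Metric.infDist x (Set.range X) = 0 then (N : ℝ) ^ ((1 : ℝ) / 3)
          else min ((N : ℝ) ^ ((1 : ℝ) / 3)) (Metric.infDist x (Set.range X))⁻¹) := by
  classical
  refine ⟨2048 * (c⁻¹ + 1)^4 * (1 + c), by positivity, ?_⟩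
  intro N hN X hsep x
  have hNpos : (0:ℝ) < N := Nat.cast_pos.2 hN
  set r := c * (N : ℝ) ^ (-(1 / 3 : ℝ)) with hr
  set u := (N : ℝ) ^ ((1 : ℝ) / 3) with huu
  have hu : 0 < u := Real.rpow_pos_of_pos hNpos _
  have hu3 : u^3 = N := by
    rw [huu, ← Real.rpow_natCast ((N:ℝ) ^ ((1:ℝ)/3)) 3, ← Real.rpow_mul hNpos.le]
    norm_num
  have hru : r = c / u := by
    rw [hr, huu, Real.rpow_neg hNpos.le]
    ring
  have hrpos : 0 < r := by rw [hru]; positivity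
  set dd := Metric.infDist x (Set.range X) with hdd
  set S := Finset.univ.filter (fun i => r / 2 ≤ dist x (X i)) with hS
  have hdSA : ∀ i ∈ S, r/2 ≤ dist x (X i) := fun i hi => (Finset.mem_filter.1 hi).2
  clear_value u dd S r
  -- main estimate
  have main : ∀ ρ : ℝ, 0 < ρ → (∀ i ∈ S, ρ ≤ dist x (X i)) →
      ∑ i ∈ S, dist x (X i) ^ (-(4:ℝ)) ≤ 16 * ((2*ρ/r+1)^3) * (ρ^4)⁻¹ := by
    intro ρ hρ hdS
    apply dyadic_sum S (fun i => dist x (X i)) ρ ((2*ρ/r+1)^3) hρ (by positivity) hdS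
    intro R hRρ
    have hR0 : 0 ≤ R := le_trans hρ.le hRρ
    have hcb := counting_ballpack X x r hrpos hsep R hR0
    have h1 : ((S.filter (fun i => dist x (X i) ≤ R)).card : ℝ) ≤
        ((Finset.univ.filter (fun i => dist x (X i) ≤ R)).card : ℝ) := by
      exact_mod_cast Finset.card_le_card
        (Finset.filter_subset_filter _ (Finset.subset_univ S))
    have hRρ1 : (1:ℝ) ≤ R/ρ := (one_le_div hρ).2 hRρ
    have hbase : R + r/2 ≤ ((2*ρ/r+1)*(R/ρ))*(r/2) := by
      have h2 : ((2*ρ/r+1)*(R/ρ))*(r/2) = R/ρ*ρ + (R/ρ)*(r/2) := by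
        field_simp
      have h3 : R/ρ*ρ = R := div_mul_cancel₀ _ hρ.ne'
      have h4 : r/2 ≤ (R/ρ)*(r/2) := le_mul_of_one_le_left (by positivity) hRρ1
      rw [h2, h3]
      linarith
    have hcube : (R + r/2)^3 ≤ ((2*ρ/r+1)^3*(R/ρ)^3)*(r/2)^3 := by
      calc (R + r/2)^3 ≤ (((2*ρ/r+1)*(R/ρ))*(r/2))^3 :=
            pow_le_pow_left₀ (by positivity) hbase 3
        _ = ((2*ρ/r+1)^3*(R/ρ)^3)*(r/2)^3 := by ring
    have h5 : ((S.filter (fun i => dist x (X i) ≤ R)).card : ℝ) * (r/2)^3 ≤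
        ((2*ρ/r+1)^3*(R/ρ)^3)*(r/2)^3 := by
      calc ((S.filter (fun i => dist x (X i) ≤ R)).card : ℝ) * (r/2)^3
          ≤ ((Finset.univ.filter (fun i => dist x (X i) ≤ R)).card : ℝ) * (r/2)^3 :=
            mul_le_mul_of_nonneg_right h1 (by positivity)
        _ ≤ (R + r/2)^3 := hcb
        _ ≤ ((2*ρ/r+1)^3*(R/ρ)^3)*(r/2)^3 := hcube
    have := le_of_mul_le_mul_right h5 (by positivity : (0:ℝ) < (r/2)^3)
    linarith
  -- Bound A
  have bA := main (r/2) (by positivity) hdSA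
  have bA' : (N:ℝ)⁻¹ * ∑ i ∈ S, dist x (X i) ^ (-(4:ℝ)) ≤ 2048 / c^4 * u := by
    have heq : (N:ℝ)⁻¹ * (16 * ((2*(r/2)/r+1)^3) * (((r/2))^4)⁻¹) = 2048 / c^4 * u := by
      rw [← hu3, hru]
      field_simp
      ring
    calc (N:ℝ)⁻¹ * ∑ i ∈ S, dist x (X i) ^ (-(4:ℝ))
        ≤ (N:ℝ)⁻¹ * (16 * ((2*(r/2)/r+1)^3) * (((r/2))^4)⁻¹) :=
          mul_le_mul_of_nonneg_left bA (by positivity)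
      _ = 2048 / c^4 * u := heq
  -- constants
  have hcinv : (0:ℝ) < c⁻¹ := by positivity
  have hC1 : 2048 / c^4 ≤ 2048 * (c⁻¹ + 1)^4 * (1 + c) := by
    have h1 : (c⁻¹)^4 ≤ (c⁻¹+1)^4 := pow_le_pow_left₀ hcinv.le (by linarith) 4
    have h2 : 2048 * (c⁻¹+1)^4 ≤ 2048 * (c⁻¹+1)^4 * (1+c) :=
      le_mul_of_one_le_right (by positivity) (by linarith)
    have h3 : 2048 / c^4 = 2048 * (c⁻¹)^4 := by rw [inv_pow, div_eq_mul_inv]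
    nlinarith
  have hC2 : 1024 / c^3 ≤ 2048 * (c⁻¹ + 1)^4 * (1 + c) := by
    have h1 : (c⁻¹)^3 ≤ (c⁻¹+1)^3 := pow_le_pow_left₀ hcinv.le (by linarith) 3
    have h15 : (c⁻¹+1)^3 ≤ (c⁻¹+1)^4 :=
      pow_le_pow_right₀ (by linarith) (by norm_num)
    have h2 : 2048 * (c⁻¹+1)^4 ≤ 2048 * (c⁻¹+1)^4 * (1+c) :=
      le_mul_of_one_le_right (by positivity) (by linarith)
    have h3 : 1024 / c^3 = 1024 * (c⁻¹)^3 := by rw [inv_pow, div_eq_mul_inv]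
    nlinarith
  by_cases h0 : dd = 0
  · rw [if_pos h0]
    calc (N:ℝ)⁻¹ * ∑ i ∈ S, dist x (X i) ^ (-(4:ℝ)) ≤ 2048 / c^4 * u := bA'
      _ ≤ 2048 * (c⁻¹ + 1)^4 * (1 + c) * u := mul_le_mul_of_nonneg_right hC1 hu.le
  · rw [if_neg h0]
    have hddnn : 0 ≤ dd := by rw [hdd]; exact Metric.infDist_nonneg
    have hdd0 : 0 < dd := hddnn.lt_of_ne' h0
    by_cases hcase : r/2 ≤ dd
    · -- Bound B available
      have hdSB : ∀ i ∈ S, dd ≤ dist x (X i) := fun i _ => by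
        rw [hdd]; exact Metric.infDist_le_dist_of_mem ⟨i, rfl⟩
      have bB := main dd hdd0 hdSB
      have bB' : (N:ℝ)⁻¹ * ∑ i ∈ S, dist x (X i) ^ (-(4:ℝ)) ≤ 1024 / c^3 * dd⁻¹ := by
        have h4 : (2*dd/r+1) ≤ 4*dd/r := by
          have h5 : (1:ℝ) ≤ 2*dd/r := (one_le_div hrpos).2 (by linarith)
          have h6 : 4*dd/r = 2*dd/r + 2*dd/r := by ring
          linarith
        have h7 : (2*dd/r+1)^3 ≤ (4*dd/r)^3 := pow_le_pow_left₀ (by positivity) h4 3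
        have heq : (N:ℝ)⁻¹ * (16 * ((4*dd/r)^3) * (dd^4)⁻¹) = 1024 / c^3 * dd⁻¹ := by
          rw [← hu3, hru]
          field_simp
          ring
        calc (N:ℝ)⁻¹ * ∑ i ∈ S, dist x (X i) ^ (-(4:ℝ))
            ≤ (N:ℝ)⁻¹ * (16 * ((2*dd/r+1)^3) * (dd^4)⁻¹) :=
              mul_le_mul_of_nonneg_left bB (by positivity)
          _ ≤ (N:ℝ)⁻¹ * (16 * ((4*dd/r)^3) * (dd^4)⁻¹) := by
              apply mul_le_mul_of_nonneg_left _ (by positivity)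
              apply mul_le_mul_of_nonneg_right _ (by positivity)
              linarith
          _ = 1024 / c^3 * dd⁻¹ := heq
      rcases le_total u dd⁻¹ with hm | hm
      · rw [min_eq_left hm]
        calc (N:ℝ)⁻¹ * ∑ i ∈ S, dist x (X i) ^ (-(4:ℝ)) ≤ 2048 / c^4 * u := bA'
          _ ≤ 2048 * (c⁻¹ + 1)^4 * (1 + c) * u := mul_le_mul_of_nonneg_right hC1 hu.le
      · rw [min_eq_right hm]
        calc (N:ℝ)⁻¹ * ∑ i ∈ S, dist x (X i) ^ (-(4:ℝ)) ≤ 1024 / c^3 * dd⁻¹ := bB'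
          _ ≤ 2048 * (c⁻¹ + 1)^4 * (1 + c) * dd⁻¹ :=
            mul_le_mul_of_nonneg_right hC2 (by positivity)
    · -- dd < r/2 : dd⁻¹ is large
      push_neg at hcase
      have hddinv : 2*u/c ≤ dd⁻¹ := by
        have h8 : dd ≤ c/(2*u) := by
          rw [hru] at hcase
          have : c/u/2 = c/(2*u) := by ring
          linarith [hcase.le, this.symm.le]
        have h9 := inv_anti₀ hdd0 h8
        calc 2*u/c = (c/(2*u))⁻¹ := by rw [inv_div]
          _ ≤ dd⁻¹ := h9
      have hmin : u/(1+c) ≤ min u dd⁻¹ := by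
        apply le_min
        · exact div_le_self hu.le (by linarith)
        · have hA : u/(1+c) ≤ 2*u/c := by
            rw [div_le_div_iff₀ (by linarith) hc]
            have hcu : (0:ℝ) ≤ u * c := mul_nonneg hu.le hc.le
            have hexp : 2*u*(1+c) = 2*u + 2*(u*c) := by ring
            linarith
          exact hA.trans hddinv
      have hmin' : u ≤ (1+c) * min u dd⁻¹ := by
        have h6 : u/(1+c) * (1+c) = u :=
          div_mul_cancel₀ _ (by positivity : (1:ℝ)+c ≠ 0)
        have h5 := mul_le_mul_of_nonneg_right hmin (by linarith : (0:ℝ) ≤ 1+c)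
        rw [h6] at h5
        exact h5.trans_eq (mul_comm _ _)
      have hmpos : (0:ℝ) ≤ min u dd⁻¹ := le_min hu.le (inv_nonneg.2 hdd0.le)
      have h3 : (c⁻¹)^4 ≤ (c⁻¹+1)^4 := pow_le_pow_left₀ hcinv.le (by linarith) 4
      have h9 : 2048 / c^4 ≤ 2048 * (c⁻¹+1)^4 := by
        rw [div_eq_mul_inv, ← inv_pow]
        exact mul_le_mul_of_nonneg_left h3 (by norm_num)
      have hstep : 2048 / c^4 * u ≤ 2048 * (c⁻¹+1)^4 * (1+c) * min u dd⁻¹ := by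
        have h7 : 2048 / c^4 * u ≤ 2048 / c^4 * ((1+c) * min u dd⁻¹) :=
          mul_le_mul_of_nonneg_left hmin' (by positivity)
        have h8 : 2048 / c^4 * ((1+c) * min u dd⁻¹) ≤
            2048 * (c⁻¹+1)^4 * (1+c) * min u dd⁻¹ := by
          have h10 : 2048 / c^4 * ((1+c) * min u dd⁻¹) =
              (2048/c^4) * (1+c) * min u dd⁻¹ := by ring
          rw [h10]
          exact mul_le_mul_of_nonneg_right
            (mul_le_mul_of_nonneg_right h9 (by linarith)) hmpos
        linarith
      exact bA'.trans hstep
end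

section
/- Let $X_1,\dots,X_N$ be points in a compact set $K \subset \mathbb{R}^3$ with $\min_{i\neq j}|X_i-X_j| \geq cN^{-1/3}$, let $R = rN^{-1/3}$ with $2r < c$, let $\bar\rho_N = \frac{1}{N}\sum_i \frac{1}{4\pi R^2}\mathcal{H}^2|_{\partial B_R(X_i)}$ and $\tilde\rho_N = \frac{1}{N}\sum_i \frac{1}{\frac{4}{3}\pi R^3}\mathds{1}_{B_R(X_i)}$. Then for every $p \in (1,\infty)$ there is $C_p$ such that for all $v \in W^{1,p}(\mathbb{R}^3)$, $\left|\int v \, d(\tilde\rho_N - \bar\rho_N)\right| \leq C_p\, N^{-1/3} r^{1-3/p}\, \|\nabla v\|_{L^p(\mathbb{R}^3)}$. -/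
open MeasureTheory

/-- The uniform (normalized) probability measure on the unit sphere of `ℝ³`. -/
noncomputable def unitSphereMeasure : Measure (Metric.sphere (0 : EuclideanSpace ℝ (Fin 3)) 1) :=
  (volume : Measure (EuclideanSpace ℝ (Fin 3))).toSphere

/-- The average of `v` over the sphere `∂B_R(X)`. -/
noncomputable def sphereAverage (v : EuclideanSpace ℝ (Fin 3) → ℝ)
    (X : EuclideanSpace ℝ (Fin 3)) (R : ℝ) : ℝ :=
  ⨍ ω, v (X + R • (ω : EuclideanSpace ℝ (Fin 3))) ∂unitSphereMeasure


open Metric Set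

local notation "E3" => EuclideanSpace ℝ (Fin 3)

lemma finrank_E3 : Module.finrank ℝ (EuclideanSpace ℝ (Fin 3)) = 3 := by simp

lemma polar_aux (g : E3 → ℝ) (hg : Integrable g) :
    (∫ x, g x) = (∫ ω : sphere (0:E3) 1,
        (∫ t in Ioi (0:ℝ), t^2 * g (t • (ω:E3))) ∂((volume : Measure E3).toSphere))
    ∧ Integrable (fun ω : sphere (0:E3) 1 => ∫ t in Ioi (0:ℝ), t^2 * g (t • (ω:E3)))
        ((volume : Measure E3).toSphere) := by
  set μ := (volume : Measure E3)
  set ν := Measure.volumeIoiPow 2 with hν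
  have hmp : MeasurePreserving (homeomorphUnitSphereProd E3) (μ.comap Subtype.val)
      (μ.toSphere.prod ν) := by
    have := μ.measurePreserving_homeomorphUnitSphereProd
    rwa [finrank_E3] at this
  set G : sphere (0:E3) 1 × Ioi (0:ℝ) → ℝ := fun z => g ((z.2 : ℝ) • (z.1 : E3)) with hG
  have hcomp : ∀ x : ({0}ᶜ : Set E3), G (homeomorphUnitSphereProd E3 x) = g x := by
    intro x
    have hx : ‖(x : E3)‖ ≠ 0 := norm_ne_zero_iff.2 x.2
    simp only [hG, homeomorphUnitSphereProd_apply_snd_coe, homeomorphUnitSphereProd_apply_fst_coe]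
    rw [smul_inv_smul₀ hx]
  have hemb : MeasurableEmbedding (Subtype.val : ({0}ᶜ : Set E3) → E3) :=
    MeasurableEmbedding.subtype_coe (measurableSet_singleton (0:E3)).compl
  have hgsub : Integrable (fun x : ({0}ᶜ : Set E3) => g x) (μ.comap Subtype.val) := by
    have : Integrable (g ∘ (Subtype.val : ({0}ᶜ : Set E3) → E3)) (μ.comap Subtype.val) := by
      rw [← hemb.integrable_map_iff, hemb.map_comap, Subtype.range_coe]
      exact hg.restrict
    exact this
  have hGint : Integrable G (μ.toSphere.prod ν) := by
    rw [← hmp.integrable_comp_emb (homeomorphUnitSphereProd E3).measurableEmbedding]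
    have : (G ∘ (homeomorphUnitSphereProd E3)) = fun x : ({0}ᶜ : Set E3) => g x := by
      funext x; exact hcomp x
    rw [this]; exact hgsub
  have hinner : ∀ ω : sphere (0:E3) 1,
      (∫ y : Ioi (0:ℝ), G (ω, y) ∂ν) = ∫ t in Ioi (0:ℝ), t^2 * g (t • (ω:E3)) := by
    intro ω
    rw [hν]
    simp only [Measure.volumeIoiPow, ENNReal.ofReal]
    rw [integral_withDensity_eq_integral_smul
      ((measurable_subtype_coe.pow_const _).real_toNNReal),
      integral_subtype_comap measurableSet_Ioi (fun t : ℝ => (t^2).toNNReal • g (t • (ω:E3)))]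
    refine setIntegral_congr_fun measurableSet_Ioi fun t ht => ?_
    rw [NNReal.smul_def, Real.coe_toNNReal _ (pow_nonneg ht.out.le _)]
    simp [hG, smul_eq_mul]
  constructor
  · calc ∫ x, g x ∂μ = ∫ x : ({0}ᶜ : Set E3), g x ∂(μ.comap Subtype.val) := by
          rw [integral_subtype_comap (measurableSet_singleton _).compl fun x => g x,
            MeasureTheory.restrict_compl_singleton]
      _ = ∫ x : ({0}ᶜ : Set E3), G (homeomorphUnitSphereProd E3 x) ∂(μ.comap Subtype.val) := by
          refine integral_congr_ae (Filter.Eventually.of_forall fun x => (hcomp x).symm)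
      _ = ∫ z, G z ∂(μ.toSphere.prod ν) :=
          hmp.integral_comp (homeomorphUnitSphereProd E3).measurableEmbedding G
      _ = ∫ ω : sphere (0:E3) 1, (∫ y : Ioi (0:ℝ), G (ω, y) ∂ν) ∂μ.toSphere :=
          integral_prod G hGint
      _ = _ := integral_congr_ae (Filter.Eventually.of_forall fun ω => hinner ω)
  · have := hGint.integral_prod_left
    refine this.congr (Filter.Eventually.of_forall fun ω => hinner ω)

lemma polar_ball {R : ℝ} (hR : 0 < R) (f : E3 → ℝ) (hf : Integrable f) :
    (∫ x in ball (0:E3) R, f x) = (∫ ω : sphere (0:E3) 1,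
        (∫ t in Ioo (0:ℝ) R, t^2 * f (t • (ω:E3))) ∂((volume : Measure E3).toSphere))
    ∧ Integrable (fun ω : sphere (0:E3) 1 => ∫ t in Ioo (0:ℝ) R, t^2 * f (t • (ω:E3)))
        ((volume : Measure E3).toSphere) := by
  set g : E3 → ℝ := (ball (0:E3) R).indicator f with hg
  have hgi : Integrable g := hf.indicator measurableSet_ball
  have key := polar_aux g hgi
  have hinner : ∀ ω : sphere (0:E3) 1,
      (∫ t in Ioi (0:ℝ), t^2 * g (t • (ω:E3))) = ∫ t in Ioo (0:ℝ) R, t^2 * f (t • (ω:E3)) := by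
    intro ω
    have hω : ‖(ω : E3)‖ = 1 := mem_sphere_zero_iff_norm.1 ω.2
    have h1 : ∀ t ∈ Ioi (0:ℝ), t^2 * g (t • (ω:E3)) =
        (Iio R).indicator (fun t => t^2 * f (t • (ω:E3))) t := by
      intro t ht
      have hnorm : ‖t • (ω:E3)‖ = t := by
        rw [norm_smul, hω, mul_one, Real.norm_eq_abs, abs_of_pos ht]
      by_cases h : t < R
      · rw [Set.indicator_of_mem (show t ∈ Iio R from h), hg, indicator_of_mem]
        rw [mem_ball_zero_iff, hnorm]; exact h
      · rw [Set.indicator_of_notMem (show t ∉ Iio R from h), hg, indicator_of_notMem, mul_zero]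
        rw [mem_ball_zero_iff, hnorm]; exact h
    rw [setIntegral_congr_fun measurableSet_Ioi h1, setIntegral_indicator measurableSet_Iio,
      Set.Ioi_inter_Iio]
  constructor
  · rw [← integral_indicator measurableSet_ball, ← hg, key.1]
    exact integral_congr_ae (Filter.Eventually.of_forall hinner)
  · exact key.2.congr (Filter.Eventually.of_forall hinner)

lemma perBall (v : E3 → ℝ) (hv : ContDiff ℝ 1 v) (hc : HasCompactSupport v)
    (X : E3) {R : ℝ} (hR : 0 < R) :
    |(⨍ x in ball X R, v x) - sphereAverage v X R| ≤
      R * ⨍ x in ball X R, ‖fderiv ℝ v x‖ := by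
  set σ := (volume : Measure E3).toSphere with hσ
  set w : E3 → ℝ := fun y => v (X + y) with hw
  set F : E3 → ℝ := fun y => ‖fderiv ℝ v (X + y)‖ with hF
  have hwcont : Continuous w := hv.continuous.comp (continuous_const.add continuous_id)
  have hwcs : HasCompactSupport w := hc.comp_homeomorph (Homeomorph.addLeft X)
  have hwi : Integrable w := hwcont.integrable_of_hasCompactSupport hwcs
  have hfdcont : Continuous (fderiv ℝ v) := hv.continuous_fderiv one_ne_zero
  have hFcont : Continuous F :=
    (hfdcont.comp (continuous_const.add continuous_id)).norm
  have hFcs : HasCompactSupport F :=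
    (((hc.fderiv ℝ)).comp_homeomorph (Homeomorph.addLeft X)).norm
  have hFi : Integrable F := hFcont.integrable_of_hasCompactSupport hFcs
  have hFnn : ∀ y, 0 ≤ F y := fun y => norm_nonneg _
  obtain ⟨hA, hAint⟩ := polar_ball hR w hwi
  obtain ⟨hD, hDint⟩ := polar_ball hR F hFi
  -- pointwise key estimate
  have key : ∀ ω : sphere (0:E3) 1,
      |(∫ t in Ioo (0:ℝ) R, t^2 * w (t • (ω:E3))) - R^3/3 * w (R • (ω:E3))| ≤
        R * ∫ t in Ioo (0:ℝ) R, t^2 * F (t • (ω:E3)) := by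
    intro ω
    have hω : ‖(ω : E3)‖ = 1 := mem_sphere_zero_iff_norm.1 ω.2
    set J := ∫ t in Ioo (0:ℝ) R, t^2 * F (t • (ω:E3)) with hJ
    have hcurve : Continuous fun u : ℝ => u • (ω:E3) := continuous_id.smul continuous_const
    have hF'cont : Continuous fun u : ℝ => F (u • (ω:E3)) := hFcont.comp hcurve
    have hw'cont : Continuous fun u : ℝ => w (u • (ω:E3)) := hwcont.comp hcurve
    have hdcont : Continuous fun u : ℝ => (fderiv ℝ v (X + u • (ω:E3))) (ω:E3) :=
      (hfdcont.comp (continuous_const.add hcurve)).clm_apply continuous_const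
    have hu2F : Continuous fun u : ℝ => u^2 * F (u • (ω:E3)) := by fun_prop
    have hu2Fint : IntegrableOn (fun u : ℝ => u^2 * F (u • (ω:E3))) (Ioo 0 R) :=
      (hu2F.integrableOn_Icc (a := 0) (b := R)).mono_set Ioo_subset_Icc_self
    have hu2Fnn : ∀ u : ℝ, 0 ≤ u^2 * F (u • (ω:E3)) := fun u => by positivity
    -- step 1 : for 0 < t ≤ R, t^2 * |w (t•ω) - w (R•ω)| ≤ J
    have step1 : ∀ t : ℝ, 0 < t → t ≤ R → t^2 * |w (t • (ω:E3)) - w (R • (ω:E3))| ≤ J := by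
      intro t ht0 htR
      have hderiv : ∀ u : ℝ, HasDerivAt (fun s : ℝ => w (s • (ω:E3)))
          ((fderiv ℝ v (X + u • (ω:E3))) (ω:E3)) u := by
        intro u
        have h1 : HasDerivAt (fun s : ℝ => X + s • (ω:E3)) (ω:E3) u := by
          simpa using ((hasDerivAt_id u).smul_const (ω:E3)).const_add X
        exact ((hv.differentiable one_ne_zero (X + u • (ω:E3))).hasFDerivAt).comp_hasDerivAt u h1
      have hftc : (∫ u in t..R, (fderiv ℝ v (X + u • (ω:E3))) (ω:E3)) =
          w (R • (ω:E3)) - w (t • (ω:E3)) :=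
        intervalIntegral.integral_eq_sub_of_hasDerivAt (fun u _ => hderiv u)
          (hdcont.intervalIntegrable t R)
      have habs : |w (t • (ω:E3)) - w (R • (ω:E3))| ≤ ∫ u in t..R, F (u • (ω:E3)) := by
        rw [abs_sub_comm, ← hftc, ← Real.norm_eq_abs]
        calc ‖∫ u in t..R, (fderiv ℝ v (X + u • (ω:E3))) (ω:E3)‖
            ≤ ∫ u in t..R, ‖(fderiv ℝ v (X + u • (ω:E3))) (ω:E3)‖ :=
              intervalIntegral.norm_integral_le_integral_norm htR
          _ ≤ ∫ u in t..R, F (u • (ω:E3)) := by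
              apply intervalIntegral.integral_mono_on htR
                (hdcont.norm.intervalIntegrable t R) (hF'cont.intervalIntegrable t R)
              intro u _
              calc ‖(fderiv ℝ v (X + u • (ω:E3))) (ω:E3)‖
                  ≤ ‖fderiv ℝ v (X + u • (ω:E3))‖ * ‖(ω:E3)‖ :=
                    ContinuousLinearMap.le_opNorm _ _
                _ = F (u • (ω:E3)) := by rw [hω, mul_one]
      calc t^2 * |w (t • (ω:E3)) - w (R • (ω:E3))|
          ≤ t^2 * ∫ u in t..R, F (u • (ω:E3)) :=
            mul_le_mul_of_nonneg_left habs (sq_nonneg t)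
        _ = ∫ u in t..R, t^2 * F (u • (ω:E3)) := by
            rw [intervalIntegral.integral_const_mul]
        _ ≤ ∫ u in t..R, u^2 * F (u • (ω:E3)) := by
            apply intervalIntegral.integral_mono_on htR
              ((continuous_const.mul hF'cont).intervalIntegrable t R) (hu2F.intervalIntegrable t R)
            intro u hu
            exact mul_le_mul_of_nonneg_right (pow_le_pow_left₀ ht0.le hu.1 2) (hFnn _)
        _ = ∫ u in Ioc t R, u^2 * F (u • (ω:E3)) := intervalIntegral.integral_of_le htR
        _ ≤ J := by
            rw [hJ]
            apply setIntegral_mono_set hu2Fint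
              (Filter.Eventually.of_forall fun u => hu2Fnn u)
            exact (HasSubset.Subset.eventuallyLE (Ioc_subset_Ioc ht0.le le_rfl)).trans
              Ioo_ae_eq_Ioc.symm.le
    -- identity and conclusion
    have hconst : (∫ t in Ioo (0:ℝ) R, t^2 * w (R • (ω:E3))) = R^3/3 * w (R • (ω:E3)) := by
      rw [integral_mul_const]
      have : (∫ t in Ioo (0:ℝ) R, t^2) = ∫ t in (0:ℝ)..R, t^2 := by
        rw [intervalIntegral.integral_of_le hR.le]
        exact setIntegral_congr_set Ioo_ae_eq_Ioc
      rw [this, integral_pow]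
      norm_num
    have hw2int : IntegrableOn (fun t : ℝ => t^2 * w (t • (ω:E3))) (Ioo 0 R) := by
      have : Continuous fun t : ℝ => t^2 * w (t • (ω:E3)) := by fun_prop
      exact (this.integrableOn_Icc (a := 0) (b := R)).mono_set Ioo_subset_Icc_self
    have hwconst_int : IntegrableOn (fun _ : ℝ => w (R • (ω:E3))) (Ioo 0 R) :=
      integrableOn_const measure_Ioo_lt_top.ne
    have hident : (∫ t in Ioo (0:ℝ) R, t^2 * w (t • (ω:E3))) - R^3/3 * w (R • (ω:E3)) =
        ∫ t in Ioo (0:ℝ) R, t^2 * (w (t • (ω:E3)) - w (R • (ω:E3))) := by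
      rw [← hconst, ← integral_sub hw2int]
      · congr 1; funext t; ring
      · have : Continuous fun t : ℝ => t^2 * w (R • (ω:E3)) := by fun_prop
        exact (this.integrableOn_Icc (a := 0) (b := R)).mono_set Ioo_subset_Icc_self
    rw [hident, ← Real.norm_eq_abs]
    calc ‖∫ t in Ioo (0:ℝ) R, t^2 * (w (t • (ω:E3)) - w (R • (ω:E3)))‖
        ≤ ∫ t in Ioo (0:ℝ) R, ‖t^2 * (w (t • (ω:E3)) - w (R • (ω:E3)))‖ :=
          norm_integral_le_integral_norm _
      _ ≤ ∫ _t in Ioo (0:ℝ) R, J := by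
          apply setIntegral_mono_on
          · have : Continuous fun t : ℝ => ‖t^2 * (w (t • (ω:E3)) - w (R • (ω:E3)))‖ := by
              fun_prop
            exact (this.integrableOn_Icc (a := 0) (b := R)).mono_set Ioo_subset_Icc_self
          · exact integrableOn_const measure_Ioo_lt_top.ne
          · exact measurableSet_Ioo
          · intro t ht
            rw [Real.norm_eq_abs, abs_mul, abs_of_nonneg (sq_nonneg t)]
            exact step1 t ht.1 ht.2.le
      _ = R * J := by
          rw [setIntegral_const, measureReal_def, Real.volume_Ioo, smul_eq_mul, sub_zero,
            ENNReal.toReal_ofReal hR.le]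
  -- integrate over the sphere
  have hSint : Integrable (fun ω : sphere (0:E3) 1 => w (R • (ω:E3))) σ := by
    have hcont : Continuous fun ω : sphere (0:E3) 1 => w (R • (ω:E3)) :=
      hwcont.comp (continuous_subtype_val.const_smul R)
    exact hcont.integrable_of_hasCompactSupport (isClosed_tsupport _).isCompact
  have main : |(∫ x in ball (0:E3) R, w x) -
      R^3/3 * ∫ ω, w (R • (ω:E3)) ∂σ| ≤ R * ∫ x in ball (0:E3) R, F x := by
    rw [hA, hD, ← integral_const_mul]
    rw [← integral_sub hAint (hSint.const_mul (R^3/3)), ← Real.norm_eq_abs]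
    calc ‖∫ ω, ((∫ t in Ioo (0:ℝ) R, t^2 * w (t • (ω:E3))) - R^3/3 * w (R • (ω:E3))) ∂σ‖
        ≤ ∫ ω, ‖(∫ t in Ioo (0:ℝ) R, t^2 * w (t • (ω:E3))) - R^3/3 * w (R • (ω:E3))‖ ∂σ :=
          norm_integral_le_integral_norm _
      _ ≤ ∫ ω, R * (∫ t in Ioo (0:ℝ) R, t^2 * F (t • (ω:E3))) ∂σ := by
          apply integral_mono ((hAint.sub (hSint.const_mul (R^3/3))).norm)
            (hDint.const_mul R) fun ω => by rw [Real.norm_eq_abs]; exact key ω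
      _ = R * ∫ ω, (∫ t in Ioo (0:ℝ) R, t^2 * F (t • (ω:E3))) ∂σ := integral_const_mul _ _
  -- translation to the origin
  have htrans : ∀ f : E3 → ℝ, (∫ x in ball X R, f x) = ∫ y in ball (0:E3) R, f (X + y) := by
    intro f
    rw [← integral_indicator measurableSet_ball, ← integral_indicator measurableSet_ball,
      ← integral_add_left_eq_self (fun x => (ball X R).indicator f x) X]
    congr 1
    funext y
    have hmem : X + y ∈ ball X R ↔ y ∈ ball (0:E3) R := by
      simp [mem_ball, dist_eq_norm, add_sub_cancel_left]
    by_cases h : y ∈ ball (0:E3) R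
    · rw [Set.indicator_of_mem (hmem.2 h), Set.indicator_of_mem h]
    · rw [Set.indicator_of_notMem (fun hx => h (hmem.1 hx)), Set.indicator_of_notMem h]
  have hballXv : (∫ x in ball X R, v x) = ∫ y in ball (0:E3) R, w y := htrans v
  have hballXF : (∫ x in ball X R, ‖fderiv ℝ v x‖) = ∫ y in ball (0:E3) R, F y :=
    htrans fun x => ‖fderiv ℝ v x‖
  have hvolX : volume (ball X R) = volume (ball (0:E3) R) :=
    Measure.addHaar_ball_center volume X R
  set V := (volume (ball (0:E3) R)).toReal with hV
  have hVpos : 0 < V :=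
    ENNReal.toReal_pos (measure_ball_pos volume 0 hR).ne' measure_ball_lt_top.ne
  set vb := (volume (ball (0:E3) 1)).toReal with hvb
  have hvbpos : 0 < vb :=
    ENNReal.toReal_pos (measure_ball_pos volume 0 one_pos).ne' measure_ball_lt_top.ne
  have hfinrank : Module.finrank ℝ (EuclideanSpace ℝ (Fin 3)) = 3 := by simp
  have hVeq : V = R^3 * vb := by
    rw [hV, Measure.addHaar_ball volume (0:E3) hR.le, ENNReal.toReal_mul,
      ENNReal.toReal_ofReal (by positivity), hfinrank, hvb]
  have hσt : (σ Set.univ).toReal = 3 * vb := by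
    rw [hσ, Measure.toSphere_apply_univ, hfinrank, ENNReal.toReal_mul, hvb]
    norm_num
  have hsph : sphereAverage v X R = ((σ Set.univ).toReal)⁻¹ * ∫ ω, w (R • (ω:E3)) ∂σ := by
    rw [sphereAverage, average_eq, smul_eq_mul]
    rfl
  rw [setAverage_eq, setAverage_eq, measureReal_def, hvolX, hballXv, hballXF, smul_eq_mul, smul_eq_mul, hsph]
  have hs : ((σ Set.univ).toReal)⁻¹ = V⁻¹ * (R^3/3) := by
    rw [hσt, hVeq]
    field_simp
  rw [hs]
  have hre : V⁻¹ * (∫ y in ball (0:E3) R, w y) - V⁻¹ * (R^3/3) * (∫ ω, w (R • (ω:E3)) ∂σ) =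
      V⁻¹ * ((∫ y in ball (0:E3) R, w y) - R^3/3 * ∫ ω, w (R • (ω:E3)) ∂σ) := by ring
  rw [hre, abs_mul, abs_of_nonneg (inv_nonneg.2 hVpos.le)]
  calc V⁻¹ * |(∫ y in ball (0:E3) R, w y) - R^3/3 * ∫ ω, w (R • (ω:E3)) ∂σ|
      ≤ V⁻¹ * (R * ∫ y in ball (0:E3) R, F y) :=
        mul_le_mul_of_nonneg_left main (inv_nonneg.2 hVpos.le)
    _ = R * (V⁻¹ * ∫ y in ball (0:E3) R, F y) := by ring

/-- **Estimate between ball-smeared and sphere-smeared empirical measures.**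
Let `X_1,…,X_N ∈ K` compact with `min_{i≠j}|X_i-X_j| ≥ cN^{-1/3}`, `R = rN^{-1/3}`
with `2r < c`.  With `ρ̄_N` smearing the empirical measure onto the spheres `∂B_R(X_i)`
and `ρ̃_N` onto the balls `B_R(X_i)`, for every `p ∈ (1,∞)` there is `C_p` with
`|∫ v d(ρ̃_N - ρ̄_N)| ≤ C_p N^{-1/3} r^{1-3/p} ‖∇v‖_{L^p(ℝ³)}` for all `v ∈ W^{1,p}`. -/
theorem ball_sphere_smearing_estimate (p : ℝ) (hp : 1 < p) :
    ∃ C : ℝ, 0 < C ∧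
      ∀ (N : ℕ), 0 < N → ∀ (c r : ℝ), 0 < c → 0 < r → 2 * r < c →
      ∀ (K : Set (EuclideanSpace ℝ (Fin 3))), IsCompact K →
      ∀ X : Fin N → EuclideanSpace ℝ (Fin 3), (∀ i, X i ∈ K) →
      (∀ i j, i ≠ j → c * (N : ℝ) ^ (-(1 / 3 : ℝ)) ≤ dist (X i) (X j)) →
      ∀ v : EuclideanSpace ℝ (Fin 3) → ℝ, ContDiff ℝ 1 v → HasCompactSupport v →
      |(N : ℝ)⁻¹ * (∑ i, ⨍ x in Metric.ball (X i) (r * (N : ℝ) ^ (-(1 / 3 : ℝ))), v x) -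
          (N : ℝ)⁻¹ * ∑ i, sphereAverage v (X i) (r * (N : ℝ) ^ (-(1 / 3 : ℝ)))| ≤
        C * (N : ℝ) ^ (-(1 / 3 : ℝ)) * r ^ ((1 : ℝ) - 3 / p) *
          (eLpNorm (fun x => ‖fderiv ℝ v x‖) (ENNReal.ofReal p) volume).toReal := by
  have hp0 : (0:ℝ) < p := lt_trans one_pos hp
  set q := Real.conjExponent p with hqdef
  have hpq : p.HolderConjugate q := Real.HolderConjugate.conjExponent hp
  set vb := (volume (ball (0:E3) 1)).toReal with hvb
  have hvbpos : 0 < vb :=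
    ENNReal.toReal_pos (measure_ball_pos volume 0 one_pos).ne' measure_ball_lt_top.ne
  refine ⟨vb ^ (-(1/p)), Real.rpow_pos_of_pos hvbpos _, ?_⟩
  intro N hN c r hc hr hrc K hK X hXK hsep v hv hcs
  have hNpos : (0:ℝ) < N := Nat.cast_pos.2 hN
  have hNe : (0:ℝ) < (N : ℝ) ^ (-(1/3:ℝ)) := Real.rpow_pos_of_pos hNpos _
  set R := r * (N : ℝ) ^ (-(1/3:ℝ)) with hRdef
  have hR : 0 < R := mul_pos hr hNe
  set g : E3 → ℝ := fun x => ‖fderiv ℝ v x‖ with hg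
  have hgcont : Continuous g := (hv.continuous_fderiv one_ne_zero).norm
  have hgcs : HasCompactSupport g := (hcs.fderiv ℝ).norm
  have hgnn : ∀ x, 0 ≤ g x := fun x => norm_nonneg _
  have hmemp : MemLp g (ENNReal.ofReal p) volume := hgcont.memLp_of_hasCompactSupport hgcs
  set gp : E3 → ℝ := fun x => g x ^ p with hgp
  have hgpcont : Continuous gp := hgcont.rpow_const fun x => Or.inr hp0.le
  have hgpcs : HasCompactSupport gp := by
    have h0 : ((0:ℝ) ^ p) = 0 := Real.zero_rpow hp0.ne'
    exact hgcs.comp_left (g := fun t : ℝ => t ^ p) h0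
  have hgpint : Integrable gp := hgpcont.integrable_of_hasCompactSupport hgpcs
  have hgpnn : ∀ x, 0 ≤ gp x := fun x => Real.rpow_nonneg (hgnn x) p
  set V := (volume (ball (0:E3) R)).toReal with hV
  have hVpos : 0 < V :=
    ENNReal.toReal_pos (measure_ball_pos volume 0 hR).ne' measure_ball_lt_top.ne
  have hvolB : ∀ i, volume (ball (X i) R) = volume (ball (0:E3) R) := fun i =>
    Measure.addHaar_ball_center volume (X i) R
  -- disjointness
  have hdisj : Pairwise (Function.onFun Disjoint (fun i : Fin N => ball (X i) R)) := by
    intro i j hij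
    refine ball_disjoint_ball ?_
    have h1 := hsep i j hij
    have h2 : R + R ≤ c * (N:ℝ) ^ (-(1/3:ℝ)) := by
      rw [hRdef]
      have : (2*r) * (N:ℝ) ^ (-(1/3:ℝ)) ≤ c * (N:ℝ) ^ (-(1/3:ℝ)) :=
        mul_le_mul_of_nonneg_right hrc.le hNe.le
      nlinarith
    calc R + R ≤ c * (N:ℝ) ^ (-(1/3:ℝ)) := h2
      _ ≤ dist (X i) (X j) := h1
  have hVeq : V = R^3 * vb := by
    have hfinrank : Module.finrank ℝ (EuclideanSpace ℝ (Fin 3)) = 3 := by simp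
    rw [hV, Measure.addHaar_ball volume (0:E3) hR.le, ENNReal.toReal_mul,
      ENNReal.toReal_ofReal (by positivity), hfinrank, hvb]
  set b : Fin N → ℝ := fun i => (∫ x in ball (X i) R, gp x) ^ (1/p) with hb
  have hintnn : ∀ i, 0 ≤ ∫ x in ball (X i) R, gp x := fun i => integral_nonneg fun x => hgpnn x
  have hbnn : ∀ i, 0 ≤ b i := fun i => Real.rpow_nonneg (hintnn i) _
  have hbp : ∀ i, b i ^ p = ∫ x in ball (X i) R, gp x := by
    intro i
    rw [hb]
    rw [← Real.rpow_mul (hintnn i), one_div, inv_mul_cancel₀ hp0.ne', Real.rpow_one]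
  -- per-ball Hoelder
  have holder : ∀ i, (⨍ x in ball (X i) R, g x) ≤ V⁻¹ * (b i * V ^ (1/q)) := by
    intro i
    haveI : Fact (volume (ball (X i) R) < ⊤) := ⟨measure_ball_lt_top⟩
    have h1 : (∫ x in ball (X i) R, g x * (1:ℝ)) ≤
        (∫ x in ball (X i) R, g x ^ p) ^ (1/p) * (∫ _x in ball (X i) R, (1:ℝ) ^ q) ^ (1/q) :=
      integral_mul_le_Lp_mul_Lq_of_nonneg hpq
        (Filter.Eventually.of_forall fun x => hgnn x)
        (Filter.Eventually.of_forall fun _ => zero_le_one)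
        (hmemp.restrict _) (memLp_const 1)
    simp only [mul_one] at h1
    have h2 : (∫ _x in ball (X i) R, (1:ℝ) ^ q) = V := by
      simp only [Real.one_rpow]
      rw [setIntegral_const, smul_eq_mul, mul_one, measureReal_def, hvolB i]
    rw [h2] at h1
    have havg : (⨍ x in ball (X i) R, g x) = V⁻¹ * ∫ x in ball (X i) R, g x := by
      rw [setAverage_eq, measureReal_def, hvolB i, smul_eq_mul]
    rw [havg]
    exact mul_le_mul_of_nonneg_left h1 (inv_nonneg.2 hVpos.le)
  -- discrete Jensen
  have jensen : (N:ℝ)⁻¹ * ∑ i, b i ≤ ((N:ℝ)⁻¹ * ∑ i, b i ^ p) ^ (1/p) := by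
    have hw' : ∑ _i : Fin N, (N:ℝ)⁻¹ = 1 := by
      rw [Finset.sum_const, Finset.card_univ, Fintype.card_fin, nsmul_eq_mul]
      exact mul_inv_cancel₀ hNpos.ne'
    have h := Real.arith_mean_le_rpow_mean Finset.univ (fun _ => (N:ℝ)⁻¹) b
      (fun i _ => inv_nonneg.2 hNpos.le) hw' (fun i _ => hbnn i) hp.le
    simpa [Finset.mul_sum] using h
  -- sum over disjoint balls
  have hsum : (∑ i, ∫ x in ball (X i) R, gp x) ≤ ∫ x, gp x := by
    rw [← integral_iUnion_fintype (fun i => measurableSet_ball) hdisj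
      (fun i => hgpint.integrableOn)]
    exact setIntegral_le_integral hgpint (Filter.Eventually.of_forall fun x => hgpnn x)
  -- eLpNorm identification
  have hT : (eLpNorm g (ENNReal.ofReal p) volume).toReal = (∫ x, gp x) ^ (1/p) := by
    have h1 : (ENNReal.ofReal p) ≠ 0 := (ENNReal.ofReal_pos.2 hp0).ne'
    rw [hmemp.eLpNorm_eq_integral_rpow_norm h1 ENNReal.ofReal_ne_top,
      ENNReal.toReal_ofReal (by positivity), ENNReal.toReal_ofReal hp0.le, one_div]
    congr 1
    refine integral_congr_ae (Filter.Eventually.of_forall fun x => ?_)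
    show ‖g x‖ ^ p = g x ^ p
    rw [Real.norm_of_nonneg (hgnn x)]
  -- constant identity
  have h1c : V⁻¹ * V ^ (1/q) = V ^ (-(1/p)) := by
    rw [← Real.rpow_neg_one V, ← Real.rpow_add hVpos]
    congr 1
    have h2 := hpq.inv_add_inv_eq_one
    rw [one_div, one_div]
    linarith
  have h2c : V ^ (-(1/p)) = R ^ (-(3/p)) * vb ^ (-(1/p)) := by
    rw [hVeq, Real.mul_rpow (by positivity) hvbpos.le]
    congr 1
    rw [← Real.rpow_natCast R 3, ← Real.rpow_mul hR.le]
    congr 1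
    all_goals push_cast
    all_goals ring
  have h3c : R * R ^ (-(3/p)) = R ^ ((1:ℝ) - 3/p) := by
    nth_rewrite 1 [← Real.rpow_one R]
    rw [← Real.rpow_add hR]
    congr 1
    all_goals ring
  have h4c : R ^ ((1:ℝ) - 3/p)
      = r ^ ((1:ℝ) - 3/p) * ((N:ℝ) ^ (-(1/3:ℝ))) ^ ((1:ℝ) - 3/p) := by
    rw [hRdef, Real.mul_rpow hr.le hNe.le]
  have h5c : ((N:ℝ) ^ (-(1/3:ℝ))) ^ ((1:ℝ) - 3/p) * ((N:ℝ)⁻¹) ^ (1/p)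
      = (N:ℝ) ^ (-(1/3:ℝ)) := by
    rw [Real.inv_rpow hNpos.le, ← Real.rpow_neg hNpos.le, ← Real.rpow_mul hNpos.le,
      ← Real.rpow_add hNpos]
    congr 1
    field_simp
    ring
  have hconst : R * V⁻¹ * V ^ (1/q) * ((N:ℝ)⁻¹) ^ (1/p)
      = vb ^ (-(1/p)) * (N:ℝ) ^ (-(1/3:ℝ)) * r ^ ((1:ℝ) - 3/p) := by
    calc R * V⁻¹ * V ^ (1/q) * ((N:ℝ)⁻¹) ^ (1/p)
        = R * (V⁻¹ * V ^ (1/q)) * ((N:ℝ)⁻¹) ^ (1/p) := by ring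
      _ = R * (R ^ (-(3/p)) * vb ^ (-(1/p))) * ((N:ℝ)⁻¹) ^ (1/p) := by rw [h1c, h2c]
      _ = vb ^ (-(1/p)) * ((R * R ^ (-(3/p))) * ((N:ℝ)⁻¹) ^ (1/p)) := by ring
      _ = vb ^ (-(1/p)) * (r ^ ((1:ℝ) - 3/p) *
            (((N:ℝ) ^ (-(1/3:ℝ))) ^ ((1:ℝ) - 3/p) * ((N:ℝ)⁻¹) ^ (1/p))) := by
          rw [h3c, h4c]; ring
      _ = vb ^ (-(1/p)) * (r ^ ((1:ℝ) - 3/p) * (N:ℝ) ^ (-(1/3:ℝ))) := by rw [h5c]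
      _ = _ := by ring
  -- main chain
  have e0 : (N:ℝ)⁻¹ * (∑ i, ⨍ x in ball (X i) R, v x)
        - (N:ℝ)⁻¹ * (∑ i, sphereAverage v (X i) R)
      = (N:ℝ)⁻¹ * ∑ i, ((⨍ x in ball (X i) R, v x) - sphereAverage v (X i) R) := by
    rw [Finset.sum_sub_distrib, mul_sub]
  rw [e0]
  calc |(N:ℝ)⁻¹ * ∑ i, ((⨍ x in ball (X i) R, v x) - sphereAverage v (X i) R)|
      = (N:ℝ)⁻¹ * |∑ i, ((⨍ x in ball (X i) R, v x) - sphereAverage v (X i) R)| := by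
        rw [abs_mul, abs_of_nonneg (inv_nonneg.2 hNpos.le)]
    _ ≤ (N:ℝ)⁻¹ * ∑ i, |(⨍ x in ball (X i) R, v x) - sphereAverage v (X i) R| :=
        mul_le_mul_of_nonneg_left (Finset.abs_sum_le_sum_abs _ _) (inv_nonneg.2 hNpos.le)
    _ ≤ (N:ℝ)⁻¹ * ∑ i, (R * V⁻¹ * V ^ (1/q)) * b i := by
        refine mul_le_mul_of_nonneg_left (Finset.sum_le_sum fun i _ => ?_)
          (inv_nonneg.2 hNpos.le)
        calc |(⨍ x in ball (X i) R, v x) - sphereAverage v (X i) R|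
            ≤ R * ⨍ x in ball (X i) R, g x := perBall v hv hcs (X i) hR
          _ ≤ R * (V⁻¹ * (b i * V ^ (1/q))) :=
              mul_le_mul_of_nonneg_left (holder i) hR.le
          _ = (R * V⁻¹ * V ^ (1/q)) * b i := by ring
    _ = (R * V⁻¹ * V ^ (1/q)) * ((N:ℝ)⁻¹ * ∑ i, b i) := by
        rw [← Finset.mul_sum]; ring
    _ ≤ (R * V⁻¹ * V ^ (1/q)) * ((N:ℝ)⁻¹ * ∑ i, b i ^ p) ^ (1/p) :=
        mul_le_mul_of_nonneg_left jensen (by positivity)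
    _ ≤ (R * V⁻¹ * V ^ (1/q)) * ((N:ℝ)⁻¹ * ∫ x, gp x) ^ (1/p) := by
        refine mul_le_mul_of_nonneg_left ?_ (by positivity)
        refine Real.rpow_le_rpow (by positivity) ?_ (by positivity)
        refine mul_le_mul_of_nonneg_left ?_ (inv_nonneg.2 hNpos.le)
        calc ∑ i, b i ^ p = ∑ i, ∫ x in ball (X i) R, gp x :=
              Finset.sum_congr rfl fun i _ => hbp i
          _ ≤ ∫ x, gp x := hsum
    _ = (R * V⁻¹ * V ^ (1/q) * ((N:ℝ)⁻¹) ^ (1/p)) * (∫ x, gp x) ^ (1/p) := by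
        rw [Real.mul_rpow (inv_nonneg.2 hNpos.le) (integral_nonneg hgpnn)]
        ring
    _ = vb ^ (-(1/p)) * (N:ℝ) ^ (-(1/3:ℝ)) * r ^ ((1:ℝ) - 3/p) * (∫ x, gp x) ^ (1/p) := by
        rw [hconst]
    _ = vb ^ (-(1/p)) * (N:ℝ) ^ (-(1/3:ℝ)) * r ^ ((1:ℝ) - 3/p) *
          (eLpNorm g (ENNReal.ofReal p) volume).toReal := by rw [hT]
end
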